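/- (Lemma 2.) Assume the connectivity graph G^H is connected, fix n̄ ∈ {1,…,d} and positive reals λ_n > 0 for n ≠ n̄, set λ_{n̄} = −Σ_{n ≠ n̄} λ_n, and let σ ∈ ℝ^d satisfy R^H σ = −λ. Define W_0(ρ) = Σ_{n=1}^d σ_n ⟨n|ρ|n⟩. Then for every n ∈ {1,…,d}, the real function u ↦ W_0(e^{−iuH} |n⟩⟨n| e^{iuH}) has second derivative at u = 0 equal to λ_n; in particular it is strictly positive for every n ≠ n̄ and equals λ_{n̄} = −Σ_{n ≠ n̄} λ_n < 0 for n = n̄. -/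

import Mathlib

open Matrix BigOperators

/-- `U_u = e^{−iuH}`, the matrix exponential of `−iuH`. -/
noncomputable def Uu {d : ℕ} (H : Matrix (Fin d) (Fin d) ℂ) (u : ℝ) :
    Matrix (Fin d) (Fin d) ℂ :=
  NormedSpace.exp ((-(Complex.I * (u : ℂ))) • H)

/-- The Laplacian matrix `R^H` with entries
`R^H_{n₁,n₂} = 2(δ_{n₁,n₂}⟨n₁|H²|n₂⟩ − |⟨n₁|H|n₂⟩|²)`. -/
noncomputable def RH {d : ℕ} (H : Matrix (Fin d) (Fin d) ℂ) : Matrix (Fin d) (Fin d) ℝ :=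
  Matrix.of fun n₁ n₂ =>
    2 * ((if n₁ = n₂ then ((H * H) n₁ n₂).re else 0) - Complex.normSq (H n₁ n₂))

/-- The connectivity graph `G^H`: vertices `{1,…,d}`, edge between `n₁ ≠ n₂` iff
`⟨n₁|H|n₂⟩ ≠ 0`. -/
def GH {d : ℕ} (H : Matrix (Fin d) (Fin d) ℂ) : SimpleGraph (Fin d) :=
  SimpleGraph.fromRel fun n₁ n₂ => H n₁ n₂ ≠ 0

/-- `W₀(ρ) = Σ_n σ_n ⟨n|ρ|n⟩`. -/
noncomputable def W0 {d : ℕ} (σ : Fin d → ℝ) (ρ : Matrix (Fin d) (Fin d) ℂ) : ℝ :=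
  ∑ k, σ k * (ρ k k).re

/-- Derivative of an entry of `Uu H u * B`. -/
lemma aux_entry_deriv {d : ℕ} (H B : Matrix (Fin d) (Fin d) ℂ) (k l : Fin d) (t : ℝ) :
    HasDerivAt (fun u : ℝ => (Uu H u * B) k l)
      ((Uu H t * ((-Complex.I) • H) * B) k l) t := by
  letI : NormedRing (Matrix (Fin d) (Fin d) ℂ) := Matrix.linftyOpNormedRing
  letI : NormedAlgebra ℝ (Matrix (Fin d) (Fin d) ℂ) := Matrix.linftyOpNormedAlgebra
  letI : CompleteSpace (Matrix (Fin d) (Fin d) ℂ) := FiniteDimensional.complete ℝ _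
  set A : Matrix (Fin d) (Fin d) ℂ := (-Complex.I) • H with hA
  have hexp : ∀ u : ℝ, Uu H u = NormedSpace.exp (u • A) := by
    intro u
    rw [Uu]
    congr 1
    rw [hA, ← smul_assoc]
    congr 1
    simp [Complex.real_smul]
    ring
  have hU : HasDerivAt (fun u : ℝ => NormedSpace.exp (u • A))
      (NormedSpace.exp (t • A) * A) t := hasDerivAt_exp_smul_const A t
  have hL : IsLinearMap ℝ (fun X : Matrix (Fin d) (Fin d) ℂ => (X * B) k l) := by
    constructor
    · intro X Y; simp [Matrix.add_mul]
    · intro c X; simp [Matrix.smul_mul]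
  let L : Matrix (Fin d) (Fin d) ℂ →L[ℝ] ℂ := LinearMap.toContinuousLinearMap (hL.mk' _)
  have h2 : HasDerivAt (fun u : ℝ => L (NormedSpace.exp (u • A)))
      (L (NormedSpace.exp (t • A) * A)) t := L.hasFDerivAt.comp_hasDerivAt t hU
  have h3 : (fun u : ℝ => L (NormedSpace.exp (u • A)))
      = fun u : ℝ => (Uu H u * B) k l := by
    funext u; rw [hexp u]; rfl
  rw [h3] at h2
  convert h2 using 1
  rw [hexp t]; rfl

/-- Lemma 2: with `G^H` connected, `λ_n > 0` for `n ≠ n̄`,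
`λ_{n̄} = −Σ_{n ≠ n̄} λ_n`, and `σ` satisfying `R^H σ = −λ`, the function
`u ↦ W₀(e^{−iuH}|n⟩⟨n|e^{iuH})` has second derivative at `u = 0` equal to `λ_n` for every
`n`; in particular it is strictly positive for `n ≠ n̄`. -/
theorem stmt_13 (d : ℕ) (hd : 1 ≤ d) (H : Matrix (Fin d) (Fin d) ℂ)
    (hH : H.IsHermitian) (hconn : (GH H).Connected)
    (nbar : Fin d) (lam : Fin d → ℝ)
    (hpos : ∀ n, n ≠ nbar → 0 < lam n)
    (hbar : lam nbar = -∑ n ∈ Finset.univ.erase nbar, lam n)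
    (σ : Fin d → ℝ) (hσ : (RH H).mulVec σ = -lam) :
    (∀ n : Fin d,
      HasDerivAt
        (deriv (fun u : ℝ =>
          W0 σ (Uu H u * Matrix.single n n 1 * (Uu H u)ᴴ)))
        (lam n) 0) ∧
    (∀ n, n ≠ nbar → 0 < lam n) := by
  refine ⟨fun n => ?_, hpos⟩
  set A : Matrix (Fin d) (Fin d) ℂ := (-Complex.I) • H with hA
  -- entry derivatives
  have hx : ∀ (k : Fin d) (t : ℝ),
      HasDerivAt (fun u : ℝ => (Uu H u) k n) ((Uu H t * A) k n) t := by
    intro k t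
    have := aux_entry_deriv H 1 k n t
    simpa [hA] using this
  have hy : ∀ (k : Fin d) (t : ℝ),
      HasDerivAt (fun u : ℝ => (Uu H u * A) k n) ((Uu H t * A * A) k n) t := by
    intro k t
    simpa [hA] using aux_entry_deriv H A k n t
  -- real and imaginary part derivatives
  have hxre : ∀ (k : Fin d) (t : ℝ),
      HasDerivAt (fun u : ℝ => ((Uu H u) k n).re) (((Uu H t * A) k n).re) t := fun k t =>
    (Complex.reCLM.hasFDerivAt.comp_hasDerivAt t (hx k t))
  have hxim : ∀ (k : Fin d) (t : ℝ),
      HasDerivAt (fun u : ℝ => ((Uu H u) k n).im) (((Uu H t * A) k n).im) t := fun k t =>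
    (Complex.imCLM.hasFDerivAt.comp_hasDerivAt t (hx k t))
  have hyre : ∀ (k : Fin d) (t : ℝ),
      HasDerivAt (fun u : ℝ => ((Uu H u * A) k n).re) (((Uu H t * A * A) k n).re) t := fun k t =>
    (Complex.reCLM.hasFDerivAt.comp_hasDerivAt t (hy k t))
  have hyim : ∀ (k : Fin d) (t : ℝ),
      HasDerivAt (fun u : ℝ => ((Uu H u * A) k n).im) (((Uu H t * A * A) k n).im) t := fun k t =>
    (Complex.imCLM.hasFDerivAt.comp_hasDerivAt t (hy k t))
  -- the function in terms of entries
  have hfun : (fun u : ℝ => W0 σ (Uu H u * Matrix.single n n 1 * (Uu H u)ᴴ))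
      = fun u : ℝ => ∑ k, σ k *
        (((Uu H u) k n).re * ((Uu H u) k n).re + ((Uu H u) k n).im * ((Uu H u) k n).im) := by
    funext u
    rw [W0]
    refine Finset.sum_congr rfl fun k _ => ?_
    congr 1
    have : ((Uu H u * Matrix.single n n 1 * (Uu H u)ᴴ : Matrix (Fin d) (Fin d) ℂ)) k k
        = (Uu H u) k n * (starRingEnd ℂ) ((Uu H u) k n) := by
      simp [Matrix.mul_apply, Matrix.single, Matrix.conjTranspose_apply,
        Finset.sum_mul, ite_and, Finset.mul_sum]
    rw [this, Complex.mul_conj]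
    simp [Complex.normSq_apply]
  -- first derivative
  set G : ℝ → ℝ := fun t => ∑ k, σ k *
    ((((Uu H t * A) k n).re * ((Uu H t) k n).re + ((Uu H t) k n).re * ((Uu H t * A) k n).re) +
     (((Uu H t * A) k n).im * ((Uu H t) k n).im + ((Uu H t) k n).im * ((Uu H t * A) k n).im))
    with hG
  have hderiv1 : ∀ t : ℝ,
      HasDerivAt (fun u : ℝ => ∑ k, σ k *
        (((Uu H u) k n).re * ((Uu H u) k n).re + ((Uu H u) k n).im * ((Uu H u) k n).im))
        (G t) t := by
    intro t
    refine HasDerivAt.fun_sum fun k _ => ?_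
    exact (((hxre k t).mul (hxre k t)).add ((hxim k t).mul (hxim k t))).const_mul (σ k)
  have hderiveq : deriv (fun u : ℝ =>
      W0 σ (Uu H u * Matrix.single n n 1 * (Uu H u)ᴴ)) = G := by
    funext t
    rw [hfun]
    exact (hderiv1 t).deriv
  rw [hderiveq]
  -- second derivative
  have hderiv2 : HasDerivAt G (∑ k, σ k *
      (((((Uu H 0 * A * A) k n).re * ((Uu H 0) k n).re + ((Uu H 0 * A) k n).re * ((Uu H 0 * A) k n).re) +
        (((Uu H 0 * A) k n).re * ((Uu H 0 * A) k n).re + ((Uu H 0) k n).re * ((Uu H 0 * A * A) k n).re)) +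
       ((((Uu H 0 * A * A) k n).im * ((Uu H 0) k n).im + ((Uu H 0 * A) k n).im * ((Uu H 0 * A) k n).im) +
        (((Uu H 0 * A) k n).im * ((Uu H 0 * A) k n).im + ((Uu H 0) k n).im * ((Uu H 0 * A * A) k n).im)))) 0 := by
    refine HasDerivAt.fun_sum fun k _ => ?_
    exact ((((hyre k 0).mul (hxre k 0)).add ((hxre k 0).mul (hyre k 0))).add
      (((hyim k 0).mul (hxim k 0)).add ((hxim k 0).mul (hyim k 0)))).const_mul (σ k)
  convert hderiv2 using 1
  -- now compute the value
  have hU0 : Uu H 0 = 1 := by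
    have h0 : (-(Complex.I * ((0:ℝ):ℂ))) • H = 0 := by norm_num
    rw [Uu, h0, NormedSpace.exp_zero]
  have hAA : A * A = (-1 : ℂ) • (H * H) := by
    rw [hA, Matrix.smul_mul, Matrix.mul_smul, smul_smul]
    congr 1
    simp [Complex.ext_iff]
  have hAkn : ∀ k, A k n = -(Complex.I * H k n) := by
    intro k; simp [hA]
  have hsym : ∀ k, RH H n k = RH H k n := by
    intro k
    have h1 : H k n = (starRingEnd ℂ) (H n k) := by
      conv_lhs => rw [← hH]
      simp [Matrix.conjTranspose_apply]
    have h2 : Complex.normSq (H n k) = Complex.normSq (H k n) := by rw [h1]; simp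
    by_cases hkl : n = k
    · subst hkl; rfl
    · simp [RH, hkl, Ne.symm hkl, h2]
  have hmv := congrFun hσ n
  rw [Matrix.mulVec, dotProduct] at hmv
  simp only [Pi.neg_apply] at hmv
  have hAA' : ∀ k, (A * A) k n = -((H * H) k n) := by
    intro k; rw [hAA]; simp
  have hkey : (∑ k, σ k *
      (((((Uu H 0 * A * A) k n).re * ((Uu H 0) k n).re + ((Uu H 0 * A) k n).re * ((Uu H 0 * A) k n).re) +
        (((Uu H 0 * A) k n).re * ((Uu H 0 * A) k n).re + ((Uu H 0) k n).re * ((Uu H 0 * A * A) k n).re)) +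
       ((((Uu H 0 * A * A) k n).im * ((Uu H 0) k n).im + ((Uu H 0 * A) k n).im * ((Uu H 0 * A) k n).im) +
        (((Uu H 0 * A) k n).im * ((Uu H 0 * A) k n).im + ((Uu H 0) k n).im * ((Uu H 0 * A * A) k n).im))))
      = ∑ k, -(RH H n k * σ k) := by
    refine Finset.sum_congr rfl fun k _ => ?_
    rw [hsym k]
    simp only [hU0, Matrix.one_mul, hAA', hAkn, Matrix.one_apply, RH, Matrix.of_apply,
      Complex.neg_re, Complex.neg_im, Complex.mul_re, Complex.mul_im,
      Complex.I_re, Complex.I_im, Complex.normSq_apply,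
      apply_ite Complex.re, apply_ite Complex.im, Complex.one_re, Complex.one_im,
      Complex.zero_re, Complex.zero_im]
    by_cases hkn : k = n
    · subst hkn; simp only [if_pos rfl, if_true]; ring
    · simp only [if_neg hkn]; ring
  rw [hkey, Finset.sum_neg_distrib, hmv, neg_neg]
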